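/- Let A be a nonzero m×m real matrix and B an n×n real matrix whose (1,1) entry satisfies B(1,1) ≠ 0. Then there exists exactly one pair (Ã, B̃) of an m×m matrix à and an n×n matrix B̃ such that B̃ ⊗ à = B ⊗ A, the Frobenius norm of à equals 1, and B̃(1,1) > 0. (This establishes that the identification conditions ‖A₁‖_F = 1 and (B₁)_{1,1} ≥ 0 pin down the factors of the Kronecker product uniquely, provided (B₁)_{1,1} ≠ 0.) -/

import Mathlib

open Matrix
open scoped Kronecker

/-- The Frobenius norm of a real matrix. -/
noncomputable def frobNorm {m n : ℕ} (M : Matrix (Fin m) (Fin n) ℝ) : ℝ :=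
  Real.sqrt (∑ i, ∑ j, (M i j) ^ 2)

lemma frobNorm_smul {m n : ℕ} (r : ℝ) (M : Matrix (Fin m) (Fin n) ℝ) :
    frobNorm (r • M) = |r| * frobNorm M := by
  unfold frobNorm
  have : (∑ i, ∑ j, ((r • M) i j) ^ 2) = r ^ 2 * ∑ i, ∑ j, (M i j) ^ 2 := by
    simp [Matrix.smul_apply, mul_pow, Finset.mul_sum]
  rw [this, Real.sqrt_mul (sq_nonneg r), Real.sqrt_sq_eq_abs]

lemma frobNorm_pos {m n : ℕ} {M : Matrix (Fin m) (Fin n) ℝ} (h : M ≠ 0) :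
    0 < frobNorm M := by
  have : ∃ i j, M i j ≠ 0 := by
    by_contra hc
    push_neg at hc
    exact h (by ext i j; simp [hc])
  obtain ⟨i, j, hij⟩ := this
  apply Real.sqrt_pos.mpr
  have h1 : 0 < ∑ j', (M i j') ^ 2 :=
    Finset.sum_pos' (fun _ _ => sq_nonneg _) ⟨j, Finset.mem_univ _, by positivity⟩
  exact Finset.sum_pos' (fun _ _ => Finset.sum_nonneg fun _ _ => sq_nonneg _)
    ⟨i, Finset.mem_univ _, h1⟩

/-- If `A ≠ 0` and the (1,1) entry of `B` is nonzero, there is exactly one pair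
`(Ã, B̃)` with `B̃ ⊗ Ã = B ⊗ A`, `‖Ã‖_F = 1` and `B̃(1,1) > 0`: the identification
conditions pin down the Kronecker factors uniquely. -/
theorem identification_unique {m n : ℕ} [NeZero n]
    (A : Matrix (Fin m) (Fin m) ℝ) (B : Matrix (Fin n) (Fin n) ℝ)
    (hA : A ≠ 0) (hB : B 0 0 ≠ 0) :
    ∃! p : Matrix (Fin m) (Fin m) ℝ × Matrix (Fin n) (Fin n) ℝ,
      p.2 ⊗ₖ p.1 = B ⊗ₖ A ∧ frobNorm p.1 = 1 ∧ 0 < p.2 0 0 := by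
  set t := B 0 0 with ht
  set c := frobNorm A with hc
  have hcpos : 0 < c := frobNorm_pos hA
  have htabs : 0 < |t| := abs_pos.mpr hB
  have hd : |t| * c ≠ 0 := by positivity
  refine ⟨((t / (|t| * c)) • A, ((|t| * c) / t) • B), ⟨?_, ?_, ?_⟩, ?_⟩
  · ext ⟨i, k⟩ ⟨j, l⟩
    simp only [Matrix.kroneckerMap_apply, Matrix.smul_apply, smul_eq_mul]
    field_simp
  · rw [frobNorm_smul, ← hc, abs_div, abs_of_pos (by positivity : (0:ℝ) < |t| * c)]
    field_simp
  · simp only [Matrix.smul_apply, smul_eq_mul, ← ht]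
    rw [div_mul_cancel₀ _ hB]
    positivity
  · rintro ⟨A', B'⟩ ⟨hk, hn, hb⟩
    have hent : ∀ i j k l, B' i j * A' k l = B i j * A k l := by
      intro i j k l
      have := congrFun (congrFun hk (i, k)) (j, l)
      simpa [Matrix.kroneckerMap_apply] using this
    have hb0 : B' 0 0 ≠ 0 := ne_of_gt hb
    -- A' is a multiple of A
    have hA' : A' = (t / B' 0 0) • A := by
      ext k l
      have := hent 0 0 k l
      simp only [Matrix.smul_apply, smul_eq_mul]
      field_simp
      linarith [hent 0 0 k l]
    have hB'00 : B' 0 0 = |t| * c := by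
      have h1 : frobNorm A' = |t / B' 0 0| * c := by rw [hA', frobNorm_smul, hc]
      rw [hn] at h1
      have h2 : |t / B' 0 0| = |t| / B' 0 0 := by
        rw [abs_div, abs_of_pos hb]
      rw [h2] at h1
      field_simp at h1
      linarith
    refine Prod.ext ?_ ?_ <;> simp only
    · rw [hA', hB'00]
    · -- show B' = ((|t| * c) / t) • B
      have hAne : ∃ k l, A k l ≠ 0 := by
        by_contra hcn
        push_neg at hcn
        exact hA (by ext k l; simp [hcn])
      obtain ⟨k, l, hkl⟩ := hAne
      ext i j
      have h1 := hent i j k l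
      have h2 : A' k l = (t / (|t| * c)) * A k l := by
        rw [hA', hB'00]; simp
      rw [h2] at h1
      simp only [Matrix.smul_apply, smul_eq_mul]
      have h3 : (B' i j * t) * A k l = (B i j * (|t| * c)) * A k l := by
        field_simp at h1; rw [h1]; ring
      have h4 : B' i j * t = B i j * (|t| * c) := mul_right_cancel₀ hkl h3
      field_simp
      linarith
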